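/- Let W = {(W_i, ω_i)}_{i∈I} be a Bessel fusion sequence in a Hilbert space H. Then W is a K-fusion frame for H (i.e., satisfies the lower bound A‖K*f‖² ≤ Σ ω_i²‖π_{W_i}f‖² for some A > 0) if and only if R(K) ⊆ R(T_W), where T_W is the synthesis operator T_W({f_i}) = Σ_{i∈I} ω_i f_i on (Σ⊕W_i)_{ℓ²}. -/

import Mathlib

open scoped InnerProductSpace ENNReal
open ContinuousLinearMap (adjoint)
set_option linter.unusedSectionVars false
set_option maxHeartbeats 1000000
set_option synthInstance.maxHeartbeats 400000

noncomputable def proj {H : Type*} [NormedAddCommGroup H] [InnerProductSpace ℂ H]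
    (U : Submodule ℂ H) [U.HasOrthogonalProjection] : H →L[ℂ] H :=
  U.subtypeL.comp (U.orthogonalProjectionOnto)

variable {H : Type*} [NormedAddCommGroup H] [InnerProductSpace ℂ H] [CompleteSpace H]
  [TopologicalSpace.SeparableSpace H]

lemma proj_eq {U : Submodule ℂ H} [U.HasOrthogonalProjection] (f : H) :
    proj U f = (U.orthogonalProjectionOnto f : H) := rfl

lemma proj_mem {U : Submodule ℂ H} [U.HasOrthogonalProjection] (f : H) :
    proj U f ∈ U := (U.orthogonalProjectionOnto f).2

lemma inner_proj_right {U : Submodule ℂ H} [U.HasOrthogonalProjection] (f w : H) (hw : w ∈ U) :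
    ⟪f, w⟫_ℂ = ⟪proj U f, w⟫_ℂ := by
  have h := Submodule.starProjection_inner_eq_zero f w hw
  rw [inner_sub_left, sub_eq_zero] at h
  exact h

lemma inner_proj_self {U : Submodule ℂ H} [U.HasOrthogonalProjection] (f : H) :
    ⟪proj U f, f⟫_ℂ = ((‖proj U f‖ ^ 2 : ℝ) : ℂ) := by
  have h1 : ⟪f, proj U f⟫_ℂ = ⟪proj U f, proj U f⟫_ℂ :=
    inner_proj_right f _ (proj_mem f)
  calc ⟪proj U f, f⟫_ℂ = (starRingEnd ℂ) ⟪f, proj U f⟫_ℂ := (inner_conj_symm _ _).symm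
    _ = (starRingEnd ℂ) ⟪proj U f, proj U f⟫_ℂ := by rw [h1]
    _ = (starRingEnd ℂ) ((‖proj U f‖ : ℂ) ^ 2) := by rw [inner_self_eq_norm_sq_to_K]; norm_cast
    _ = ((‖proj U f‖ ^ 2 : ℝ) : ℂ) := by
        push_cast
        rw [← Complex.ofReal_pow, Complex.conj_ofReal, Complex.ofReal_pow]

lemma real_smul_eq {r : ℝ} {x : H} : (r : ℂ) • x = r • x := by
  rw [show ((r:ℝ):ℂ) = algebraMap ℝ ℂ r from rfl, algebraMap_smul]

lemma key_identity {ι : Type*} (W : ι → Submodule ℂ H) [∀ i, CompleteSpace (W i)]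
    (ω : ι → ℝ) (hω : ∀ i, 0 < ω i)
    (TW : lp (fun i => W i) 2 →L[ℂ] H)
    (hTW : ∀ g : lp (fun i => W i) 2, HasSum (fun i => ω i • ((g i : H))) (TW g)) (f : H) :
    Summable (fun i => ω i ^ 2 * ‖proj (W i) f‖ ^ 2) ∧
    ‖adjoint TW f‖ ^ 2 = ∑' i, ω i ^ 2 * ‖proj (W i) f‖ ^ 2 := by
  classical
  set gf : ∀ i, W i := fun i => (ω i : ℂ) • (W i).orthogonalProjectionOnto f with hgfdef
  have hcoe : ∀ i, ((gf i : H)) = (ω i : ℂ) • proj (W i) f := fun i => rfl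
  have hnorm : ∀ i, ‖gf i‖ = ω i * ‖proj (W i) f‖ := by
    intro i
    have h : ‖gf i‖ = ‖(gf i : H)‖ := rfl
    rw [h, hcoe, norm_smul]
    simp [abs_of_pos (hω i)]
  -- finite sum bound
  have hsum_bound : ∀ s : Finset ι,
      ∑ i ∈ s, ω i ^ 2 * ‖proj (W i) f‖ ^ 2 ≤ (‖TW‖ * ‖f‖) ^ 2 := by
    intro s
    set g : lp (fun i => W i) 2 := ∑ i ∈ s, lp.single 2 i (gf i) with hgdef
    have hga : ∀ j, (g : ∀ i, W i) j = if j ∈ s then gf j else 0 := by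
      intro j
      rw [hgdef, lp.coeFn_sum, Finset.sum_apply]
      simp only [lp.single_apply]
      rw [Finset.sum_pi_single]
    have hTWg : TW g = ∑ i ∈ s, ω i • ((gf i : H)) := by
      have h0 : ∀ i ∉ s, ω i • ((g i : H)) = 0 := by
        intro i hi
        rw [hga i, if_neg hi]
        simp
      have h1 : HasSum (fun i => ω i • ((g i : H))) (∑ i ∈ s, ω i • ((g i : H))) :=
        hasSum_sum_of_ne_finset_zero h0
      rw [(hTW g).unique h1]
      exact Finset.sum_congr rfl fun i hi => by rw [hga i, if_pos hi]
    have hterm : ∀ i, ⟪ω i • ((gf i : H)), f⟫_ℂ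
        = ((ω i ^ 2 * ‖proj (W i) f‖ ^ 2 : ℝ) : ℂ) := by
      intro i
      rw [hcoe, ← real_smul_eq (r := ω i), smul_smul, ← Complex.ofReal_mul,
        inner_smul_left, Complex.conj_ofReal, inner_proj_self, ← Complex.ofReal_mul]
      exact congrArg Complex.ofReal (by ring)
    have hinner : ⟪TW g, f⟫_ℂ = ((∑ i ∈ s, ω i ^ 2 * ‖proj (W i) f‖ ^ 2 : ℝ) : ℂ) := by
      rw [hTWg, sum_inner, Complex.ofReal_sum]
      exact Finset.sum_congr rfl fun i _ => hterm i
    have hnormg : ‖g‖ ^ 2 = ∑ i ∈ s, ω i ^ 2 * ‖proj (W i) f‖ ^ 2 := by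
      have hterm2 : ∀ i ∈ s, ⟪lp.single 2 i (gf i), g⟫_ℂ
          = ((ω i ^ 2 * ‖proj (W i) f‖ ^ 2 : ℝ) : ℂ) := by
        intro i hi
        rw [lp.inner_single_left, hga i, if_pos hi, inner_self_eq_norm_sq_to_K, hnorm]
        norm_cast
        try ring
        try rfl
        try simp [RCLike.ofReal_alg]
      have hgg : ⟪g, g⟫_ℂ = ((∑ i ∈ s, ω i ^ 2 * ‖proj (W i) f‖ ^ 2 : ℝ) : ℂ) := by
        nth_rewrite 1 [hgdef]
        rw [sum_inner, Complex.ofReal_sum]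
        exact Finset.sum_congr rfl hterm2
      have hh : ⟪g, g⟫_ℂ = ((‖g‖ ^ 2 : ℝ) : ℂ) := by
        rw [inner_self_eq_norm_sq_to_K]
        norm_cast
      rw [hgg] at hh
      exact_mod_cast hh.symm
    have hS_eq : ∑ i ∈ s, ω i ^ 2 * ‖proj (W i) f‖ ^ 2 = ‖⟪TW g, f⟫_ℂ‖ := by
      rw [hinner, Complex.norm_real, Real.norm_eq_abs, abs_of_nonneg]
      positivity
    have hle : ‖⟪TW g, f⟫_ℂ‖ ≤ ‖TW‖ * ‖g‖ * ‖f‖ := by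
      calc ‖⟪TW g, f⟫_ℂ‖ ≤ ‖TW g‖ * ‖f‖ := norm_inner_le_norm _ _
        _ ≤ ‖TW‖ * ‖g‖ * ‖f‖ :=
          mul_le_mul_of_nonneg_right (TW.le_opNorm g) (norm_nonneg f)
    rw [hS_eq] at hnormg ⊢
    nlinarith [norm_nonneg g, norm_nonneg f, norm_nonneg (⟪TW g, f⟫_ℂ),
      norm_nonneg TW, sq_nonneg (‖g‖ - ‖TW‖ * ‖f‖)]
  have hS : Summable (fun i => ω i ^ 2 * ‖proj (W i) f‖ ^ 2) :=
    summable_of_sum_le (fun i => by positivity) hsum_bound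
  have hmem : Memℓp gf 2 := by
    apply memℓp_gen
    refine hS.congr fun i => ?_
    simp only [ENNReal.toReal_ofNat]
    rw [show (2:ℝ) = ((2:ℕ):ℝ) by norm_num, Real.rpow_natCast, hnorm]
    ring
  set Tst : lp (fun i => W i) 2 := ⟨gf, hmem⟩ with hTst
  have hTst_apply : ∀ i, (Tst : ∀ i, W i) i = gf i := fun i => rfl
  have hadj : adjoint TW f = Tst := by
    refine ext_inner_right ℂ fun g => ?_
    rw [ContinuousLinearMap.adjoint_inner_left]
    have h1 : HasSum (fun i => ⟪f, ω i • ((g i : H))⟫_ℂ) ⟪f, TW g⟫_ℂ :=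
      (hTW g).mapL (innerSL ℂ f)
    have h2 : HasSum (fun i => ⟪(Tst : ∀ i, W i) i, g i⟫_ℂ) ⟪Tst, g⟫_ℂ :=
      lp.hasSum_inner Tst g
    have h3 : (fun i => ⟪f, ω i • ((g i : H))⟫_ℂ)
        = fun i => ⟪(Tst : ∀ i, W i) i, g i⟫_ℂ := by
      funext i
      rw [hTst_apply, Submodule.coe_inner, hcoe, inner_smul_left, Complex.conj_ofReal]
      rw [show (ω i • ((g i : H))) = (ω i : ℂ) • ((g i : H)) from real_smul_eq.symm,
        inner_smul_right, ← inner_proj_right f _ (g i).2]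
    rw [h3] at h1
    exact h1.unique h2
  have hn2 : ‖Tst‖ ^ 2 = ∑' i, ω i ^ 2 * ‖proj (W i) f‖ ^ 2 := by
    have h0 : (0:ℝ) < (2 : ℝ≥0∞).toReal := by simp
    have h := lp.norm_rpow_eq_tsum h0 Tst
    simp only [ENNReal.toReal_ofNat] at h
    rw [show (2:ℝ) = ((2:ℕ):ℝ) by norm_num, Real.rpow_natCast] at h
    rw [show ‖Tst‖ ^ (2:ℕ) = ‖Tst‖ ^ 2 from rfl] at h
    rw [h]
    refine tsum_congr fun i => ?_
    rw [Real.rpow_natCast, hnorm]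
    ring
  exact ⟨hS, by rw [hadj]; exact hn2⟩

section Douglas

variable {E F G : Type*}
  [NormedAddCommGroup E] [InnerProductSpace ℂ E] [CompleteSpace E]
  [NormedAddCommGroup F] [InnerProductSpace ℂ F] [CompleteSpace F]
  [NormedAddCommGroup G] [InnerProductSpace ℂ G] [CompleteSpace G]

/-- Majorization implies range inclusion (one half of Douglas' lemma). -/
lemma range_le_of_majorization (T : E →L[ℂ] F) (K : G →L[ℂ] F) (c : ℝ)
    (hmaj : ∀ f : F, ‖adjoint K f‖ ≤ c * ‖adjoint T f‖) :
    LinearMap.range (K : G →ₗ[ℂ] F) ≤ LinearMap.range (T : E →ₗ[ℂ] F) := by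
  classical
  have hker : ∀ f f' : F, adjoint T f = adjoint T f' → adjoint K f = adjoint K f' := by
    intro f f' h
    have h0 : adjoint T (f - f') = 0 := by rw [map_sub, h, sub_self]
    have h1 := hmaj (f - f')
    rw [h0, norm_zero, mul_zero] at h1
    have h2 := le_antisymm h1 (norm_nonneg _)
    rw [map_sub] at h2
    exact sub_eq_zero.mp (norm_eq_zero.mp h2)
  rintro _ ⟨x, rfl⟩
  set p : Submodule ℂ E := LinearMap.range (adjoint T : F →ₗ[ℂ] E) with hp
  have hpick : ∀ z : p, ∃ f : F, adjoint T f = (z : E) := fun z => z.2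
  set pk : p → F := fun z => (hpick z).choose with hpk
  have hpks : ∀ z : p, adjoint T (pk z) = (z : E) := fun z => (hpick z).choose_spec
  have hwd : ∀ (z : p) (f : F), adjoint T f = (z : E) →
      ⟪K x, f⟫_ℂ = ⟪K x, pk z⟫_ℂ := by
    intro z f hf
    have h := hker f (pk z) (by rw [hf, hpks])
    rw [← ContinuousLinearMap.adjoint_inner_right K,
      ← ContinuousLinearMap.adjoint_inner_right K, h]
  set φ : p →ₗ[ℂ] ℂ :=
    { toFun := fun z => ⟪K x, pk z⟫_ℂ
      map_add' := by
        intro z z'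
        show ⟪K x, pk (z + z')⟫_ℂ = ⟪K x, pk z⟫_ℂ + ⟪K x, pk z'⟫_ℂ
        rw [← hwd (z + z') (pk z + pk z') (by rw [map_add, hpks, hpks]; rfl),
          inner_add_right]
      map_smul' := by
        intro cc z
        show ⟪K x, pk (cc • z)⟫_ℂ = (RingHom.id ℂ) cc * ⟪K x, pk z⟫_ℂ
        rw [← hwd (cc • z) (cc • pk z) (by rw [map_smul, hpks]; rfl),
          inner_smul_right]
        rfl } with hφ
  have hφ_bound : ∀ z : p, ‖φ z‖ ≤ (c * ‖x‖) * ‖z‖ := by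
    intro z
    have h1 : ‖φ z‖ = ‖⟪K x, pk z⟫_ℂ‖ := rfl
    have h2 : ⟪K x, pk z⟫_ℂ = ⟪x, adjoint K (pk z)⟫_ℂ :=
      (ContinuousLinearMap.adjoint_inner_right K _ _).symm
    rw [h1, h2]
    calc ‖⟪x, adjoint K (pk z)⟫_ℂ‖ ≤ ‖x‖ * ‖adjoint K (pk z)‖ := norm_inner_le_norm _ _
      _ ≤ ‖x‖ * (c * ‖adjoint T (pk z)‖) :=
          mul_le_mul_of_nonneg_left (hmaj _) (norm_nonneg x)
      _ = (c * ‖x‖) * ‖(z : E)‖ := by rw [hpks]; ring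
      _ = (c * ‖x‖) * ‖z‖ := rfl
  set φc : p →L[ℂ] ℂ := φ.mkContinuous _ hφ_bound with hφc
  obtain ⟨g, hg, -⟩ := exists_extension_norm_eq p φc
  refine ⟨(InnerProductSpace.toDual ℂ E).symm g, ?_⟩
  refine (ext_inner_right ℂ fun v => ?_)
  set y : E := (InnerProductSpace.toDual ℂ E).symm g with hy
  have h1 : ⟪T y, v⟫_ℂ = ⟪y, adjoint T v⟫_ℂ :=
    (ContinuousLinearMap.adjoint_inner_right T y v).symm
  have h2 : ⟪y, adjoint T v⟫_ℂ = g (adjoint T v) := by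
    rw [hy]; exact InnerProductSpace.toDual_symm_apply
  have hmem : adjoint T v ∈ p := LinearMap.mem_range_self _ v
  have h3 : g (adjoint T v) = φc ⟨adjoint T v, hmem⟩ := hg ⟨adjoint T v, hmem⟩
  have h4 : φc ⟨adjoint T v, hmem⟩ = ⟪K x, pk ⟨adjoint T v, hmem⟩⟫_ℂ := rfl
  have h5 : ⟪K x, pk ⟨adjoint T v, hmem⟩⟫_ℂ = ⟪K x, v⟫_ℂ :=
    (hwd ⟨adjoint T v, hmem⟩ v rfl).symm
  change ⟪T y, v⟫_ℂ = ⟪K x, v⟫_ℂ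
  rw [h1, h2, h3, h4, h5]

/-- Range inclusion gives a bounded factorization (the other half of Douglas' lemma). -/
lemma exists_factorization (T : E →L[ℂ] F) (K : G →L[ℂ] F)
    (hr : LinearMap.range (K : G →ₗ[ℂ] F) ≤ LinearMap.range (T : E →ₗ[ℂ] F)) :
    ∃ C : G →L[ℂ] E, T.comp C = K := by
  classical
  set N : Submodule ℂ E := LinearMap.ker (T : E →ₗ[ℂ] F) with hN
  haveI : CompleteSpace N := (ContinuousLinearMap.isClosed_ker T).completeSpace_coe
  have huniq : ∀ u v : E, u ∈ Nᗮ → v ∈ Nᗮ → T u = T v → u = v := by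
    intro u v hu hv huv
    have h1 : u - v ∈ Nᗮ := Submodule.sub_mem _ hu hv
    have h2 : u - v ∈ N := by
      rw [hN, LinearMap.mem_ker, map_sub, ContinuousLinearMap.coe_coe, huv, sub_self]
    have h3 : u - v ∈ N ⊓ Nᗮ := ⟨h2, h1⟩
    rw [(Submodule.orthogonal_disjoint N).eq_bot] at h3
    exact sub_eq_zero.mp h3
  have hpick : ∀ x : G, ∃ z : E, T z = K x := fun x => hr (LinearMap.mem_range_self _ x)
  set Cf : G → E := fun x => (Nᗮ.orthogonalProjectionOnto ((hpick x).choose) : E) with hCf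
  have hCfM : ∀ x, Cf x ∈ Nᗮ := fun x => SetLike.coe_mem _
  have hCfT : ∀ x, T (Cf x) = K x := by
    intro x
    have hzs : T (hpick x).choose = K x := (hpick x).choose_spec
    have h1 : (hpick x).choose - (Nᗮ.orthogonalProjectionOnto (hpick x).choose : E) ∈ Nᗮᗮ :=
      Submodule.sub_starProjection_mem_orthogonal _
    rw [Submodule.orthogonal_orthogonal] at h1
    have h2 : T ((hpick x).choose - (Nᗮ.orthogonalProjectionOnto (hpick x).choose : E)) = 0 :=
      LinearMap.mem_ker.mp h1
    rw [map_sub, sub_eq_zero] at h2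
    rw [hCf, ← h2]
    exact hzs
  have hadd : ∀ x y, Cf (x + y) = Cf x + Cf y := by
    intro x y
    refine huniq _ _ (hCfM _) (Submodule.add_mem _ (hCfM x) (hCfM y)) ?_
    rw [map_add T, hCfT, hCfT, hCfT]
    exact map_add K x y
  have hsmul : ∀ (cc : ℂ) (x : G), Cf (cc • x) = cc • Cf x := by
    intro cc x
    refine huniq _ _ (hCfM _) (Submodule.smul_mem _ cc (hCfM x)) ?_
    rw [map_smul, hCfT, hCfT]
    exact map_smul K cc x
  set Clin : G →ₗ[ℂ] E :=
    { toFun := Cf, map_add' := hadd, map_smul' := hsmul } with hClin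
  have hClin_apply : ∀ x, Clin x = Cf x := fun x => rfl
  have hcont : Continuous Clin := by
    apply Clin.continuous_of_seq_closed_graph
    intro u x y hux huy
    have hyM : y ∈ Nᗮ := by
      have hMc : IsClosed ((Nᗮ : Submodule ℂ E) : Set E) := N.isClosed_orthogonal
      exact hMc.mem_of_tendsto huy (Filter.Eventually.of_forall fun n => hCfM (u n))
    have hTy : T y = K x := by
      have h1 : Filter.Tendsto (fun n => T (Clin (u n))) Filter.atTop (nhds (T y)) :=
        (T.continuous.tendsto y).comp huy
      have h2 : (fun n => T (Clin (u n))) = fun n => K (u n) :=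
        funext fun n => hCfT (u n)
      rw [h2] at h1
      exact tendsto_nhds_unique h1 ((K.continuous.tendsto x).comp hux)
    exact huniq y (Clin x) hyM (hCfM x) (by rw [hTy, hClin_apply, hCfT])
  refine ⟨⟨Clin, hcont⟩, ?_⟩
  ext x
  exact hCfT x

end Douglas

theorem bessel_fusion_is_K_fusion_iff_range_subset {ι : Type*} [Countable ι]
    (K : H →L[ℂ] H) (W : ι → Submodule ℂ H) [∀ i, CompleteSpace (W i)]
    (ω : ι → ℝ) (hω : ∀ i, 0 < ω i) (B : ℝ) (hB : 0 < B)
    (hBessel : ∀ f : H, ∑' i, ω i ^ 2 * ‖proj (W i) f‖ ^ 2 ≤ B * ‖f‖ ^ 2)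
    (TW : lp (fun i => W i) 2 →L[ℂ] H)
    (hTW : ∀ g : lp (fun i => W i) 2, HasSum (fun i => ω i • ((g i : H))) (TW g)) :
    (∃ A : ℝ, 0 < A ∧ ∀ f : H,
        A * ‖adjoint K f‖ ^ 2 ≤ ∑' i, ω i ^ 2 * ‖proj (W i) f‖ ^ 2) ↔
      LinearMap.range (K : H →ₗ[ℂ] H) ≤ LinearMap.range (TW : lp (fun i => W i) 2 →ₗ[ℂ] H) := by
  have hkey := key_identity W ω hω TW hTW
  constructor
  · rintro ⟨A, hA, hlow⟩
    refine range_le_of_majorization TW K (Real.sqrt A⁻¹) ?_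
    intro f
    have h1 : A * ‖adjoint K f‖ ^ 2 ≤ ‖adjoint TW f‖ ^ 2 := by
      rw [(hkey f).2]; exact hlow f
    have h2 : ‖adjoint K f‖ ^ 2 ≤ A⁻¹ * ‖adjoint TW f‖ ^ 2 := by
      rw [← le_div_iff₀' hA] at h1
      rwa [div_eq_inv_mul] at h1
    calc ‖adjoint K f‖ = Real.sqrt (‖adjoint K f‖ ^ 2) :=
          (Real.sqrt_sq (norm_nonneg _)).symm
      _ ≤ Real.sqrt (A⁻¹ * ‖adjoint TW f‖ ^ 2) := Real.sqrt_le_sqrt h2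
      _ = Real.sqrt A⁻¹ * ‖adjoint TW f‖ := by
          rw [Real.sqrt_mul (by positivity), Real.sqrt_sq (norm_nonneg _)]
  · intro hr
    obtain ⟨C, hC⟩ := exists_factorization TW K hr
    have hadjK : adjoint K = (adjoint C).comp (adjoint TW) := by
      rw [← hC, ContinuousLinearMap.adjoint_comp]
    set c : ℝ := ‖adjoint C‖ with hc
    have hbound : ∀ f, ‖adjoint K f‖ ≤ c * ‖adjoint TW f‖ := by
      intro f
      rw [hadjK]
      exact (adjoint C).le_opNorm _
    refine ⟨(c ^ 2 + 1)⁻¹, by positivity, fun f => ?_⟩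
    rw [← (hkey f).2]
    have h1 : ‖adjoint K f‖ ^ 2 ≤ (c ^ 2 + 1) * ‖adjoint TW f‖ ^ 2 := by
      have h2 := hbound f
      nlinarith [norm_nonneg (adjoint K f), norm_nonneg (adjoint TW f),
        norm_nonneg (adjoint C), sq_nonneg (‖adjoint TW f‖)]
    have h3 : (c ^ 2 + 1)⁻¹ * ‖adjoint K f‖ ^ 2
        ≤ (c ^ 2 + 1)⁻¹ * ((c ^ 2 + 1) * ‖adjoint TW f‖ ^ 2) :=
      mul_le_mul_of_nonneg_left h1 (by positivity)
    rw [← mul_assoc, inv_mul_cancel₀ (by positivity), one_mul] at h3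
    exact h3
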